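/- Let r > 0 and let u be a C² vector field on the closed disk B_r = {x ∈ ℝ² : |x| ≤ r} such that ∂ᵢuⱼ + ∂ⱼuᵢ = 0 on the open disk for all i,j ∈ {1,2}, and such that u is tangential on the boundary circle, i.e. u(x)·x = 0 whenever |x| = r. Then there exists c ∈ ℝ with u(x) = c·(x₂, −x₁) for all x in the disk. -/
import Mathlib


open scoped BigOperators

noncomputable section

abbrev E2 := EuclideanSpace ℝ (Fin 2)

/-- Partial derivative in the `i`-th coordinate direction of a scalar function on `ℝ²`. -/
noncomputable def pd (i : Fin 2) (f : E2 → ℝ) (x : E2) : ℝ :=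
  fderiv ℝ f x (EuclideanSpace.single i 1)

/-- A continuous linear functional on `ℝ²` vanishing on the standard basis is zero. -/
lemma clm_zero_of_single (L : E2 →L[ℝ] ℝ) (h0 : L (EuclideanSpace.single 0 1) = 0)
    (h1 : L (EuclideanSpace.single 1 1) = 0) : L = 0 := by
  apply ContinuousLinearMap.ext
  intro v
  have hv : v = v 0 • EuclideanSpace.single 0 1 + v 1 • EuclideanSpace.single 1 1 := by
    ext i
    fin_cases i <;> simp [EuclideanSpace.single_apply]
  rw [hv]
  simp [h0, h1]

/-- A `C²` vector field on the closed disk of radius `r` whose deformation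
tensor vanishes on the open disk and which is tangential on the boundary circle is a rigid
rotation `u x = c • (x₂, -x₁)`. -/
theorem deformation_free_tangential_disk
    (r : ℝ) (hr : 0 < r) (u : E2 → E2)
    (hu : ContDiffOn ℝ 2 u {x : E2 | ‖x‖ ≤ r})
    (hdef : ∀ x : E2, ‖x‖ < r → ∀ i j : Fin 2,
      pd i (fun y => u y j) x + pd j (fun y => u y i) x = 0)
    (htan : ∀ x : E2, ‖x‖ = r → (∑ i : Fin 2, u x i * x i) = 0) :
    ∃ c : ℝ, ∀ x : E2, ‖x‖ ≤ r →
      u x 0 = c * x 1 ∧ u x 1 = -(c * x 0) := by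
  have hball : ∀ x : E2, x ∈ Metric.ball (0:E2) r ↔ ‖x‖ < r := by
    intro x; simp [Metric.mem_ball, dist_zero_right]
  have hsub : Metric.ball (0:E2) r ⊆ {x : E2 | ‖x‖ ≤ r} := by
    intro x hx; exact le_of_lt ((hball x).1 hx)
  -- `u` is `C²` at interior points
  have hC2 : ∀ x ∈ Metric.ball (0:E2) r, ContDiffAt ℝ 2 u x := by
    intro x hx
    exact hu.contDiffAt (Filter.mem_of_superset (Metric.isOpen_ball.mem_nhds hx) hsub)
  have hdiff : ∀ x ∈ Metric.ball (0:E2) r, DifferentiableAt ℝ u x := fun x hx =>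
    (hC2 x hx).differentiableAt (by norm_num)
  have hfd : ∀ x ∈ Metric.ball (0:E2) r, DifferentiableAt ℝ (fderiv ℝ u) x := by
    intro x hx
    exact ((hC2 x hx).fderiv_right (m := 1) (by norm_num)).differentiableAt (by norm_num)
  -- component functions and their derivatives
  have hcomp : ∀ x ∈ Metric.ball (0:E2) r, ∀ j : Fin 2,
      HasFDerivAt (fun y => u y j)
        ((EuclideanSpace.proj j : E2 →L[ℝ] ℝ).comp (fderiv ℝ u x)) x := by
    intro x hx j
    exact ((EuclideanSpace.proj j).hasFDerivAt.comp x (hdiff x hx).hasFDerivAt :)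
  have hpd : ∀ x ∈ Metric.ball (0:E2) r, ∀ i j : Fin 2,
      pd i (fun y => u y j) x = fderiv ℝ u x (EuclideanSpace.single i 1) j := by
    intro x hx i j
    rw [pd, (hcomp x hx j).fderiv]
    rfl
  -- the entries of the Jacobian
  set φ : Fin 2 → Fin 2 → E2 → ℝ :=
    fun j k x => fderiv ℝ u x (EuclideanSpace.single j 1) k with hφ
  -- the Jacobian entries as compositions of a CLM with `fderiv u`
  have hΨ : ∀ j k : Fin 2, ∀ x ∈ Metric.ball (0:E2) r,
      HasFDerivAt (φ j k)
        (((EuclideanSpace.proj k : E2 →L[ℝ] ℝ).comp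
          (ContinuousLinearMap.apply ℝ E2 (EuclideanSpace.single j 1))).comp
            (fderiv ℝ (fderiv ℝ u) x)) x := by
    intro j k x hx
    exact (((EuclideanSpace.proj k : E2 →L[ℝ] ℝ).comp
      (ContinuousLinearMap.apply ℝ E2 (EuclideanSpace.single j 1))).hasFDerivAt.comp x
        (hfd x hx).hasFDerivAt :)
  have hφfd : ∀ j k : Fin 2, ∀ x ∈ Metric.ball (0:E2) r, ∀ i : Fin 2,
      fderiv ℝ (φ j k) x (EuclideanSpace.single i 1)
        = fderiv ℝ (fderiv ℝ u) x (EuclideanSpace.single i 1) (EuclideanSpace.single j 1) k := by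
    intro j k x hx i
    rw [(hΨ j k x hx).fderiv]
    rfl
  -- symmetry of second derivatives
  have hsymm : ∀ x ∈ Metric.ball (0:E2) r, ∀ v w : E2,
      fderiv ℝ (fderiv ℝ u) x v w = fderiv ℝ (fderiv ℝ u) x w v := by
    intro x hx v w
    apply second_derivative_symmetric_of_eventually (f := u) (f' := fderiv ℝ u)
    · filter_upwards [Metric.isOpen_ball.mem_nhds hx] with y hy
      exact (hdiff y hy).hasFDerivAt
    · exact (hfd x hx).hasFDerivAt
  -- antisymmetry in the last two indices
  have hanti : ∀ x ∈ Metric.ball (0:E2) r, ∀ i j k : Fin 2,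
      fderiv ℝ (fderiv ℝ u) x (EuclideanSpace.single i 1) (EuclideanSpace.single j 1) k
        + fderiv ℝ (fderiv ℝ u) x (EuclideanSpace.single i 1) (EuclideanSpace.single k 1) j
        = 0 := by
    intro x hx i j k
    have hzero : (fun y => φ j k y + φ k j y) =ᶠ[nhds x] fun _ => (0:ℝ) := by
      filter_upwards [Metric.isOpen_ball.mem_nhds hx] with y hy
      have := hdef y ((hball y).1 hy) j k
      rw [hpd y hy j k, hpd y hy k j] at this
      simpa [hφ] using this
    have h1 : fderiv ℝ (fun y => φ j k y + φ k j y) x = 0 := by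
      rw [hzero.fderiv_eq]; exact fderiv_const_apply 0
    have h2 : fderiv ℝ (fun y => φ j k y + φ k j y) x
        = fderiv ℝ (φ j k) x + fderiv ℝ (φ k j) x :=
      fderiv_add (hΨ j k x hx).differentiableAt (hΨ k j x hx).differentiableAt
    have h3 := congrArg (fun (L : E2 →L[ℝ] ℝ) => L (EuclideanSpace.single i 1)) (h2.symm.trans h1)
    simp only [ContinuousLinearMap.add_apply, ContinuousLinearMap.zero_apply] at h3
    rw [hφfd j k x hx i, hφfd k j x hx i] at h3
    exact h3
  -- all second derivatives vanish
  have hT : ∀ x ∈ Metric.ball (0:E2) r, ∀ i j k : Fin 2,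
      fderiv ℝ (fderiv ℝ u) x (EuclideanSpace.single i 1) (EuclideanSpace.single j 1) k = 0 := by
    intro x hx i j k
    set T : Fin 2 → Fin 2 → Fin 2 → ℝ := fun a b c =>
      fderiv ℝ (fderiv ℝ u) x (EuclideanSpace.single a 1) (EuclideanSpace.single b 1) c with hTdef
    have hs : ∀ a b c : Fin 2, T a b c = T b a c := by
      intro a b c
      have := hsymm x hx (EuclideanSpace.single a 1) (EuclideanSpace.single b 1)
      exact congrArg (fun z : E2 => z c) this
    have ha : ∀ a b c : Fin 2, T a b c = - T a c b := by
      intro a b c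
      have := hanti x hx a b c
      linarith
    have : T i j k = - T i j k := by
      calc T i j k = - T i k j := ha i j k
        _ = - T k i j := by rw [hs i k j]
        _ = T k j i := by rw [ha k i j]; ring_nf
        _ = T j k i := hs k j i
        _ = - T j i k := ha j k i
        _ = - T i j k := by rw [hs j i k]
    linarith
  -- hence each Jacobian entry has vanishing derivative on the ball
  have hφconst : ∀ j k : Fin 2, ∀ x ∈ Metric.ball (0:E2) r, φ j k x = φ j k 0 := by
    intro j k x hx
    apply (convex_ball (0:E2) r).is_const_of_fderivWithin_eq_zero
      (f := φ j k) (fun y hy => (hΨ j k y hy).differentiableAt.differentiableWithinAt)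
      ?_ hx (Metric.mem_ball_self hr)
    intro y hy
    rw [fderivWithin_of_isOpen Metric.isOpen_ball hy]
    apply clm_zero_of_single
    · rw [hφfd j k y hy 0]; exact hT y hy 0 j k
    · rw [hφfd j k y hy 1]; exact hT y hy 1 j k
  set c : ℝ := φ 0 1 0 with hc
  -- values of the Jacobian entries on the ball
  have hentry : ∀ x ∈ Metric.ball (0:E2) r,
      φ 0 0 x = 0 ∧ φ 1 1 x = 0 ∧ φ 0 1 x = c ∧ φ 1 0 x = -c := by
    intro x hx
    have h00 := hdef x ((hball x).1 hx) 0 0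
    rw [hpd x hx 0 0] at h00
    have h11 := hdef x ((hball x).1 hx) 1 1
    rw [hpd x hx 1 1] at h11
    have h01 := hdef x ((hball x).1 hx) 0 1
    rw [hpd x hx 0 1, hpd x hx 1 0] at h01
    have hφ01 : φ 0 1 x = c := hφconst 0 1 x hx
    refine ⟨by simpa [hφ] using (by linarith : fderiv ℝ u x (EuclideanSpace.single 0 1) 0 = 0),
      by simpa [hφ] using (by linarith : fderiv ℝ u x (EuclideanSpace.single 1 1) 1 = 0),
      hφ01, ?_⟩
    have : φ 0 1 x + φ 1 0 x = 0 := by simpa [hφ] using h01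
    linarith
  -- the two affine combinations are constant on the ball
  set a0 : ℝ := u 0 0 + c * (0:E2) 1 with ha0
  set a1 : ℝ := u 0 1 - c * (0:E2) 0 with ha1
  have haffine : ∀ x ∈ Metric.ball (0:E2) r,
      u x 0 + c * x 1 = a0 ∧ u x 1 - c * x 0 = a1 := by
    have key : ∀ x ∈ Metric.ball (0:E2) r,
        (u x 0 + c * x 1 = u (0:E2) 0 + c * (0:E2) 1) ∧
        (u x 1 - c * x 0 = u (0:E2) 1 - c * (0:E2) 0) := by
      intro x hx
      have hd0 : DifferentiableOn ℝ (fun y : E2 => u y 0 + c * y 1) (Metric.ball (0:E2) r) := by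
        intro y hy
        exact ((hcomp y hy 0).add
          (((EuclideanSpace.proj (1:Fin 2)).hasFDerivAt (x := y)).const_mul
            c)).differentiableAt.differentiableWithinAt
      have hz0 : ∀ y ∈ Metric.ball (0:E2) r,
          fderivWithin ℝ (fun y : E2 => u y 0 + c * y 1) (Metric.ball (0:E2) r) y = 0 := by
        intro y hy
        rw [fderivWithin_of_isOpen Metric.isOpen_ball hy]
        have hD := (hcomp y hy 0).add
          (((EuclideanSpace.proj (1:Fin 2)).hasFDerivAt (x := y)).const_mul c)
        have hD2 : HasFDerivAt (fun y : E2 => u y 0 + c * y 1)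
            ((EuclideanSpace.proj (0:Fin 2)).comp (fderiv ℝ u y)
              + c • EuclideanSpace.proj (1:Fin 2)) y := hD
        rw [hD2.fderiv]
        obtain ⟨e00, e11, e01, e10⟩ := hentry y hy
        apply clm_zero_of_single
        · have h : fderiv ℝ u y (EuclideanSpace.single 0 1) 0 = 0 := by simpa [hφ] using e00
          simp [ContinuousLinearMap.add_apply, h, EuclideanSpace.single_apply]
        · have h : fderiv ℝ u y (EuclideanSpace.single 1 1) 0 = -c := by simpa [hφ] using e10
          simp [ContinuousLinearMap.add_apply, h, EuclideanSpace.single_apply]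
      have hd1 : DifferentiableOn ℝ (fun y : E2 => u y 1 - c * y 0) (Metric.ball (0:E2) r) := by
        intro y hy
        exact ((hcomp y hy 1).sub
          (((EuclideanSpace.proj (0:Fin 2)).hasFDerivAt (x := y)).const_mul
            c)).differentiableAt.differentiableWithinAt
      have hz1 : ∀ y ∈ Metric.ball (0:E2) r,
          fderivWithin ℝ (fun y : E2 => u y 1 - c * y 0) (Metric.ball (0:E2) r) y = 0 := by
        intro y hy
        rw [fderivWithin_of_isOpen Metric.isOpen_ball hy]
        have hD := (hcomp y hy 1).sub
          (((EuclideanSpace.proj (0:Fin 2)).hasFDerivAt (x := y)).const_mul c)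
        have hD2 : HasFDerivAt (fun y : E2 => u y 1 - c * y 0)
            ((EuclideanSpace.proj (1:Fin 2)).comp (fderiv ℝ u y)
              - c • EuclideanSpace.proj (0:Fin 2)) y := hD
        rw [hD2.fderiv]
        obtain ⟨e00, e11, e01, e10⟩ := hentry y hy
        apply clm_zero_of_single
        · have h : fderiv ℝ u y (EuclideanSpace.single 0 1) 1 = c := by simpa [hφ] using e01
          simp [ContinuousLinearMap.sub_apply, h, EuclideanSpace.single_apply]
        · have h : fderiv ℝ u y (EuclideanSpace.single 1 1) 1 = 0 := by simpa [hφ] using e11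
          simp [ContinuousLinearMap.sub_apply, h, EuclideanSpace.single_apply]
      exact ⟨(convex_ball (0:E2) r).is_const_of_fderivWithin_eq_zero hd0 hz0 hx
          (Metric.mem_ball_self hr),
        (convex_ball (0:E2) r).is_const_of_fderivWithin_eq_zero hd1 hz1 hx
          (Metric.mem_ball_self hr)⟩
    intro x hx
    exact key x hx
  -- extend to the closed disk by continuity
  have hclosed : ∀ x : E2, ‖x‖ ≤ r →
      u x 0 + c * x 1 = a0 ∧ u x 1 - c * x 0 = a1 := by
    intro x hx
    have hxmem : x ∈ {y : E2 | ‖y‖ ≤ r} := hx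
    have hcu : ContinuousWithinAt u {y : E2 | ‖y‖ ≤ r} x :=
      hu.continuousOn x hxmem
    -- approach along the segment t • x, t < 1
    have htend : Filter.Tendsto (fun t : ℝ => t • x) (nhdsWithin 1 (Set.Iio 1)) (nhds x) := by
      have : Filter.Tendsto (fun t : ℝ => t • x) (nhds 1) (nhds ((1:ℝ) • x)) :=
        (continuous_id.smul continuous_const).tendsto 1
      rw [one_smul] at this
      exact this.mono_left nhdsWithin_le_nhds
    have hmem : ∀ᶠ t : ℝ in nhdsWithin 1 (Set.Iio 1), (t • x) ∈ Metric.ball (0:E2) r := by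
      have hIoo : Set.Ioo (0:ℝ) 1 ∈ nhdsWithin (1:ℝ) (Set.Iio 1) :=
        Ioo_mem_nhdsLT_of_mem (by constructor <;> norm_num)
      filter_upwards [hIoo] with t ht
      rw [hball]
      have : ‖t • x‖ = |t| * ‖x‖ := by rw [norm_smul, Real.norm_eq_abs]
      rw [this, abs_of_pos ht.1]
      calc t * ‖x‖ ≤ t * r := by nlinarith [ht.1.le, hx]
        _ < r := by nlinarith [ht.2, hr]
    have htendW : Filter.Tendsto (fun t : ℝ => t • x) (nhdsWithin 1 (Set.Iio 1))
        (nhdsWithin x {y : E2 | ‖y‖ ≤ r}) := by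
      apply tendsto_nhdsWithin_of_tendsto_nhds_of_eventually_within _ htend
      filter_upwards [hmem] with t ht using hsub ht
    have hu_tend : Filter.Tendsto (fun t : ℝ => u (t • x)) (nhdsWithin 1 (Set.Iio 1))
        (nhds (u x)) := hcu.tendsto.comp htendW
    constructor
    · have hL : Filter.Tendsto (fun t : ℝ => u (t • x) 0 + c * (t • x) 1)
          (nhdsWithin 1 (Set.Iio 1)) (nhds (u x 0 + c * x 1)) := by
        apply Filter.Tendsto.add
        · exact ((EuclideanSpace.proj (0:Fin 2)).continuous.tendsto (u x)).comp hu_tend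
        · have : Filter.Tendsto (fun t : ℝ => c * (t • x) 1)
              (nhds 1) (nhds (c * ((1:ℝ) • x) 1)) := by
            apply Filter.Tendsto.const_mul
            exact ((EuclideanSpace.proj (1:Fin 2)).continuous.tendsto _).comp
              ((continuous_id.smul continuous_const).tendsto 1)
          rw [one_smul] at this
          exact this.mono_left nhdsWithin_le_nhds
      have hR : ∀ᶠ t : ℝ in nhdsWithin 1 (Set.Iio 1),
          u (t • x) 0 + c * (t • x) 1 = a0 := by
        filter_upwards [hmem] with t ht
        exact (haffine _ ht).1
      have : Filter.Tendsto (fun _ : ℝ => a0) (nhdsWithin 1 (Set.Iio 1)) (nhds a0) :=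
        tendsto_const_nhds
      exact tendsto_nhds_unique (hL.congr' hR) this
    · have hL : Filter.Tendsto (fun t : ℝ => u (t • x) 1 - c * (t • x) 0)
          (nhdsWithin 1 (Set.Iio 1)) (nhds (u x 1 - c * x 0)) := by
        apply Filter.Tendsto.sub
        · exact ((EuclideanSpace.proj (1:Fin 2)).continuous.tendsto (u x)).comp hu_tend
        · have : Filter.Tendsto (fun t : ℝ => c * (t • x) 0)
              (nhds 1) (nhds (c * ((1:ℝ) • x) 0)) := by
            apply Filter.Tendsto.const_mul
            exact ((EuclideanSpace.proj (0:Fin 2)).continuous.tendsto _).comp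
              ((continuous_id.smul continuous_const).tendsto 1)
          rw [one_smul] at this
          exact this.mono_left nhdsWithin_le_nhds
      have hR : ∀ᶠ t : ℝ in nhdsWithin 1 (Set.Iio 1),
          u (t • x) 1 - c * (t • x) 0 = a1 := by
        filter_upwards [hmem] with t ht
        exact (haffine _ ht).2
      exact tendsto_nhds_unique (hL.congr' hR) tendsto_const_nhds
  -- the boundary condition kills the constants
  have hx0 : ‖(EuclideanSpace.single (0:Fin 2) r : E2)‖ = r := by
    rw [EuclideanSpace.norm_single]; exact abs_of_pos hr
  have hx1 : ‖(EuclideanSpace.single (1:Fin 2) r : E2)‖ = r := by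
    rw [EuclideanSpace.norm_single]; exact abs_of_pos hr
  have ha0z : a0 = 0 := by
    have ht := htan (EuclideanSpace.single (0:Fin 2) r) hx0
    rw [Fin.sum_univ_two] at ht
    have h0 := (hclosed (EuclideanSpace.single (0:Fin 2) r) (le_of_eq hx0)).1
    simp [EuclideanSpace.single_apply] at ht h0
    rcases ht with ht | ht
    · rw [ht] at h0; linarith
    · exact absurd ht (ne_of_gt hr)
  have ha1z : a1 = 0 := by
    have ht := htan (EuclideanSpace.single (1:Fin 2) r) hx1
    rw [Fin.sum_univ_two] at ht
    have h1 := (hclosed (EuclideanSpace.single (1:Fin 2) r) (le_of_eq hx1)).2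
    simp [EuclideanSpace.single_apply] at ht h1
    rcases ht with ht | ht
    · rw [ht] at h1; linarith
    · exact absurd ht (ne_of_gt hr)
  refine ⟨-c, fun x hx => ?_⟩
  obtain ⟨h0, h1⟩ := hclosed x hx
  rw [ha0z] at h0; rw [ha1z] at h1
  constructor <;> linarith

end
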